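/- Suppose Assumption AC holds: there exist sos polynomials a_0, a_1,…,a_r, b_1,…,b_t and R > 0 with R − ‖[x]_d‖² = a_0 + ∑_i a_i f_i + ∑_j b_j h_j identically, deg(a_i f_i) ≤ 2d and deg(b_j h_j) ≤ 2d. Let k ≥ d and let y ∈ ℝ^{ℕ^n_{2k}} satisfy y_0 = 1, L_1^{(k)}[y] ⪰ 0, L_{f_i}^{(k)}[y] ⪰ 0 for all i, and L_{h_j}^{(k)}[y] ⪰ 0 for all j. Then for every multi-index θ with |θ| ≤ k − d, one has R·y_{2θ} ≥ ∑_{|β|≤d} y_{2β+2θ}. -/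

import Mathlib

open MvPolynomial Finsupp

noncomputable section

/-- The total degree `|α|` of a multi-index `α ∈ ℕ^n`. -/
def mdeg {n : ℕ} (α : Fin n →₀ ℕ) : ℕ := ∑ i, α i

/-- `⌈m/2⌉` for a natural number `m`. -/
def halfCeil (m : ℕ) : ℕ := (m + 1) / 2

/-- The Riesz functional `R_y(f) = ∑_γ f_γ y_γ`. -/
def Riesz {n : ℕ} (y : (Fin n →₀ ℕ) → ℝ) (f : MvPolynomial (Fin n) ℝ) : ℝ :=
  ∑ γ ∈ f.support, f.coeff γ * y γ

/-- The `k`-th localizing matrix `L_f^{(k)}[y]`, indexed by multi-indices; its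
`(α,β)` entry is `∑_γ f_γ y_{α+β+γ}` when `|α|,|β| ≤ s := k - ⌈deg f / 2⌉` (and `0` otherwise). -/
def locMat {n : ℕ} (k : ℕ) (f : MvPolynomial (Fin n) ℝ) (y : (Fin n →₀ ℕ) → ℝ) :
    Matrix (Fin n →₀ ℕ) (Fin n →₀ ℕ) ℝ := fun α β =>
  if mdeg α ≤ k - halfCeil f.totalDegree ∧ mdeg β ≤ k - halfCeil f.totalDegree then
    ∑ γ ∈ f.support, f.coeff γ * y (α + β + γ)
  else 0

/-- Positive semidefiniteness of a (block-finitely supported) matrix indexed by multi-indices: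
symmetry together with nonnegativity of the quadratic form on all finitely supported vectors. -/
def IsPSD {n : ℕ} (M : Matrix (Fin n →₀ ℕ) (Fin n →₀ ℕ) ℝ) : Prop :=
  (∀ α β, M α β = M β α) ∧
  ∀ v : (Fin n →₀ ℕ) →₀ ℝ, 0 ≤ ∑ α ∈ v.support, ∑ β ∈ v.support, v α * M α β * v β

/-- The evaluation `u^α` of a monomial with multi-index `α` at a point `u`. -/
def monoEval {n : ℕ} (u : Fin n → ℝ) (α : Fin n →₀ ℕ) : ℝ := ∏ i, u i ^ α i

/-- The finite set of multi-indices `α ∈ ℕ^n` with `|α| ≤ D`. -/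
def degLE (n D : ℕ) : Finset (Fin n →₀ ℕ) :=
  (Finset.Iic (Finsupp.equivFunOnFinite.symm fun _ : Fin n => D)).filter fun α => mdeg α ≤ D

end

/-- A sum-of-squares (sos) polynomial. -/
def IsSos {n : ℕ} (σ : MvPolynomial (Fin n) ℝ) : Prop :=
  ∃ (L : ℕ) (p : Fin L → MvPolynomial (Fin n) ℝ), σ = ∑ l, p l ^ 2

/-- The polynomial `‖[x]_D‖² = ∑_{|β| ≤ D} x^{2β}`. -/
noncomputable def monVecSq (n D : ℕ) : MvPolynomial (Fin n) ℝ :=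
  ∑ β ∈ degLE n D, (MvPolynomial.monomial β (1 : ℝ)) ^ 2

section Aux

variable {n : ℕ}

lemma mdeg_eq (α : Fin n →₀ ℕ) : (α.sum fun _ e => e) = mdeg α := by
  rw [mdeg]
  exact Finsupp.sum_fintype _ _ (fun _ => rfl)

lemma mdeg_le_totalDegree {p : MvPolynomial (Fin n) ℝ} {α : Fin n →₀ ℕ}
    (h : α ∈ p.support) : mdeg α ≤ p.totalDegree :=
  (mdeg_eq α) ▸ MvPolynomial.le_totalDegree h

lemma Riesz_eq_sum_of_subset {y : (Fin n →₀ ℕ) → ℝ} {p : MvPolynomial (Fin n) ℝ}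
    {S : Finset (Fin n →₀ ℕ)} (hS : p.support ⊆ S) :
    Riesz y p = ∑ γ ∈ S, p.coeff γ * y γ :=
  Finset.sum_subset hS (fun γ _ hγ => by
    rw [MvPolynomial.notMem_support_iff.mp hγ, zero_mul])

lemma Riesz_add (y : (Fin n →₀ ℕ) → ℝ) (p q : MvPolynomial (Fin n) ℝ) :
    Riesz y (p + q) = Riesz y p + Riesz y q := by
  rw [Riesz_eq_sum_of_subset (S := p.support ∪ q.support) (fun _ hγ => MvPolynomial.support_add hγ),
    Riesz_eq_sum_of_subset (S := p.support ∪ q.support) Finset.subset_union_left,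
    Riesz_eq_sum_of_subset (S := p.support ∪ q.support) Finset.subset_union_right,
    ← Finset.sum_add_distrib]
  exact Finset.sum_congr rfl fun γ _ => by rw [MvPolynomial.coeff_add, add_mul]

noncomputable def rieszHom (y : (Fin n →₀ ℕ) → ℝ) : MvPolynomial (Fin n) ℝ →+ ℝ :=
  AddMonoidHom.mk' (Riesz y) (Riesz_add y)

lemma Riesz_sum (y : (Fin n →₀ ℕ) → ℝ) {ι : Type*} (s : Finset ι)
    (g : ι → MvPolynomial (Fin n) ℝ) :
    Riesz y (∑ i ∈ s, g i) = ∑ i ∈ s, Riesz y (g i) :=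
  map_sum (rieszHom y) g s

lemma Riesz_sub (y : (Fin n →₀ ℕ) → ℝ) (p q : MvPolynomial (Fin n) ℝ) :
    Riesz y (p - q) = Riesz y p - Riesz y q :=
  map_sub (rieszHom y) p q

lemma Riesz_monomial (y : (Fin n →₀ ℕ) → ℝ) (γ : Fin n →₀ ℕ) (c : ℝ) :
    Riesz y (monomial γ c) = c * y γ := by
  by_cases hc : c = 0
  · simp [Riesz, hc]
  · simp [Riesz, MvPolynomial.support_monomial, hc, MvPolynomial.coeff_monomial]

lemma homComp_top_mul (p q : MvPolynomial (Fin n) ℝ) {a b : ℕ}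
    (hp : p.totalDegree ≤ a) (hq : q.totalDegree ≤ b) :
    homogeneousComponent (a + b) (p * q) =
      homogeneousComponent a p * homogeneousComponent b q := by
  have hps : (∑ i ∈ Finset.range (a + 1), homogeneousComponent i p) = p := by
    conv_rhs => rw [← sum_homogeneousComponent p]
    exact (Finset.sum_subset (s₁ := Finset.range (p.totalDegree + 1)) (s₂ := Finset.range (a + 1))
      (Finset.range_subset_range.mpr (by omega))
      (fun i _ hi => homogeneousComponent_eq_zero i p (by
        simp only [Finset.mem_range, not_lt] at hi; omega))).symm
  have hqs : (∑ j ∈ Finset.range (b + 1), homogeneousComponent j q) = q := by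
    conv_rhs => rw [← sum_homogeneousComponent q]
    exact (Finset.sum_subset (s₁ := Finset.range (q.totalDegree + 1)) (s₂ := Finset.range (b + 1))
      (Finset.range_subset_range.mpr (by omega))
      (fun j _ hj => homogeneousComponent_eq_zero j q (by
        simp only [Finset.mem_range, not_lt] at hj; omega))).symm
  conv_lhs => rw [← hps, ← hqs]
  rw [Finset.sum_mul_sum, map_sum]
  simp_rw [map_sum]
  have hterm : ∀ i ∈ Finset.range (a + 1), ∀ j ∈ Finset.range (b + 1),
      homogeneousComponent (a + b) (homogeneousComponent i p * homogeneousComponent j q) =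
      if a + b = i + j then homogeneousComponent i p * homogeneousComponent j q else 0 :=
    fun i _ j _ => homogeneousComponent_of_mem
      ((MvPolynomial.mem_homogeneousSubmodule _ _).mpr
        ((homogeneousComponent_isHomogeneous i p).mul (homogeneousComponent_isHomogeneous j q)))
  rw [Finset.sum_congr rfl (fun i hi => Finset.sum_congr rfl (fun j hj => hterm i hi j hj))]
  rw [Finset.sum_eq_single_of_mem a (Finset.self_mem_range_succ a)]
  · rw [Finset.sum_eq_single_of_mem b (Finset.self_mem_range_succ b)]
    · rw [if_pos rfl]
    · intro j _ hjne
      exact if_neg (by omega)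
  · intro i hi hine
    apply Finset.sum_eq_zero
    intro j hj
    have h1 := Finset.mem_range.mp hi
    have h2 := Finset.mem_range.mp hj
    exact if_neg (by omega)

lemma homComp_totalDegree_ne_zero {p : MvPolynomial (Fin n) ℝ} (hp : p ≠ 0) :
    homogeneousComponent p.totalDegree p ≠ 0 := by
  obtain ⟨γ, hγmem, hγ⟩ := Finset.exists_mem_eq_sup p.support
    (MvPolynomial.support_nonempty.mpr hp) (fun γ => γ.sum fun _ e => e)
  intro h0
  have hc : MvPolynomial.coeff γ (homogeneousComponent p.totalDegree p) =
      MvPolynomial.coeff γ p := by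
    rw [coeff_homogeneousComponent, if_pos]
    show γ.degree = p.totalDegree
    rw [MvPolynomial.totalDegree, hγ]
    rfl
  rw [h0, MvPolynomial.coeff_zero] at hc
  exact MvPolynomial.mem_support_iff.mp hγmem hc.symm

lemma le_totalDegree_mul {p q : MvPolynomial (Fin n) ℝ} (hp : p ≠ 0) (hq : q ≠ 0) :
    p.totalDegree + q.totalDegree ≤ (p * q).totalDegree := by
  by_contra hlt
  push_neg at hlt
  have h := homComp_top_mul p q le_rfl le_rfl
  rw [homogeneousComponent_eq_zero (p.totalDegree + q.totalDegree) (p * q) hlt] at h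
  exact mul_ne_zero (homComp_totalDegree_ne_zero hp) (homComp_totalDegree_ne_zero hq) h.symm

lemma sos_deg_le {L : ℕ} (p : Fin L → MvPolynomial (Fin n) ℝ) (l : Fin L) :
    2 * (p l).totalDegree ≤ (∑ i, p i ^ 2).totalDegree := by
  by_cases hl : p l = 0
  · simp [hl]
  set D := Finset.univ.sup fun i => (p i).totalDegree with hD
  have hlD : (p l).totalDegree ≤ D := by rw [hD]; exact Finset.le_sup (f := fun i => (p i).totalDegree) (Finset.mem_univ l)
  obtain ⟨l0, hl0, hl0D⟩ : ∃ l0, p l0 ≠ 0 ∧ (p l0).totalDegree = D := by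
    obtain ⟨l1, -, h1⟩ := Finset.exists_mem_eq_sup Finset.univ ⟨l, Finset.mem_univ l⟩
      (fun i => (p i).totalDegree)
    by_cases h0 : p l1 = 0
    · have hD0 : D = 0 := by rw [hD, h1, h0, MvPolynomial.totalDegree_zero]
      exact ⟨l, hl, by omega⟩
    · exact ⟨l1, h0, h1.symm⟩
  have key : homogeneousComponent (D + D) (∑ i, p i ^ 2) =
      ∑ i, (homogeneousComponent D (p i)) ^ 2 := by
    rw [map_sum]
    refine Finset.sum_congr rfl fun i _ => ?_
    rw [sq, sq]
    have hiD : (p i).totalDegree ≤ D := by rw [hD]; exact Finset.le_sup (f := fun i => (p i).totalDegree) (Finset.mem_univ i)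
    exact homComp_top_mul _ _ hiD hiD
  have hQ : homogeneousComponent D (p l0) ≠ 0 := hl0D ▸ homComp_totalDegree_ne_zero hl0
  obtain ⟨u, hu⟩ : ∃ u : Fin n → ℝ, eval u (homogeneousComponent D (p l0)) ≠ 0 := by
    by_contra hall
    push_neg at hall
    exact hQ (MvPolynomial.funext fun x => by rw [hall x, map_zero])
  have hne : homogeneousComponent (D + D) (∑ i, p i ^ 2) ≠ 0 := by
    rw [key]
    intro h0
    have heval := congrArg (eval u) h0
    rw [map_sum, map_zero] at heval
    simp_rw [map_pow] at heval
    have hterm : (eval u (homogeneousComponent D (p l0))) ^ 2 = 0 :=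
      (Finset.sum_eq_zero_iff_of_nonneg (fun i _ => sq_nonneg _)).mp heval l0 (Finset.mem_univ l0)
    exact hu (pow_eq_zero_iff two_ne_zero |>.mp hterm)
  have hDD : D + D ≤ (∑ i, p i ^ 2).totalDegree := by
    by_contra hlt
    push_neg at hlt
    exact hne (homogeneousComponent_eq_zero (D + D) _ hlt)
  omega

lemma riesz_mul3 (y : (Fin n →₀ ℕ) → ℝ) (p q f : MvPolynomial (Fin n) ℝ) :
    Riesz y (p * q * f) = ∑ α ∈ p.support, ∑ β ∈ q.support, ∑ γ ∈ f.support,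
      MvPolynomial.coeff α p * MvPolynomial.coeff β q * MvPolynomial.coeff γ f
        * y (α + β + γ) := by
  have h : p * q * f = ∑ α ∈ p.support, ∑ β ∈ q.support, ∑ γ ∈ f.support,
      monomial (α + β + γ)
        (MvPolynomial.coeff α p * MvPolynomial.coeff β q * MvPolynomial.coeff γ f) := by
    conv_lhs => rw [p.as_sum, q.as_sum, f.as_sum]
    simp_rw [Finset.sum_mul, Finset.mul_sum, MvPolynomial.monomial_mul, Finset.sum_mul,
      MvPolynomial.monomial_mul]
    exact Finset.sum_congr rfl fun α _ => Finset.sum_comm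
  rw [h, Riesz_sum]
  simp_rw [Riesz_sum, Riesz_monomial]

lemma riesz_qqf_nonneg (k : ℕ) (y : (Fin n →₀ ℕ) → ℝ) (f : MvPolynomial (Fin n) ℝ)
    (hPSD : IsPSD (locMat k f y)) (q : MvPolynomial (Fin n) ℝ)
    (hq : ∀ α ∈ q.support, mdeg α ≤ k - halfCeil f.totalDegree) :
    0 ≤ Riesz y (q * q * f) := by
  set v : (Fin n →₀ ℕ) →₀ ℝ :=
    ⟨q.support, fun α => MvPolynomial.coeff α q, fun α => MvPolynomial.mem_support_iff⟩ with hv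
  have hval : ∀ α, v α = MvPolynomial.coeff α q := fun α => rfl
  have hsupp : v.support = q.support := rfl
  refine le_trans (hPSD.2 v) (le_of_eq ?_)
  rw [hsupp, riesz_mul3]
  refine Finset.sum_congr rfl fun α hα => Finset.sum_congr rfl fun β hβ => ?_
  rw [hval, hval, locMat, if_pos ⟨hq α hα, hq β hβ⟩, Finset.mul_sum, Finset.sum_mul]
  exact Finset.sum_congr rfl fun γ _ => by ring

end Aux

section Main

variable {n : ℕ}

lemma riesz_shift_nonneg (k : ℕ) (y : (Fin n →₀ ℕ) → ℝ) (f : MvPolynomial (Fin n) ℝ)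
    (hPSD : IsPSD (locMat k f y)) (θ : Fin n →₀ ℕ) {L : ℕ}
    (p : Fin L → MvPolynomial (Fin n) ℝ)
    (hdeg : ∀ l, mdeg θ + (p l).totalDegree ≤ k - halfCeil f.totalDegree) :
    0 ≤ Riesz y (monomial (θ + θ) 1 * ((∑ l, p l ^ 2) * f)) := by
  have hsplit : monomial (θ + θ) (1 : ℝ) * ((∑ l, p l ^ 2) * f)
      = ∑ l, (monomial θ 1 * p l) * (monomial θ 1 * p l) * f := by
    rw [Finset.sum_mul, Finset.mul_sum]
    refine Finset.sum_congr rfl fun l _ => ?_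
    have h1 : (monomial (θ + θ) (1 : ℝ)) = monomial θ 1 * monomial θ 1 := by
      rw [MvPolynomial.monomial_mul, one_mul]
    rw [h1]; ring
  rw [hsplit, Riesz_sum]
  refine Finset.sum_nonneg fun l _ => ?_
  refine riesz_qqf_nonneg k y f hPSD _ fun α hα => ?_
  have h2 : mdeg α ≤ (monomial θ (1:ℝ) * p l).totalDegree := mdeg_le_totalDegree hα
  have h3 : (monomial θ (1:ℝ) * p l).totalDegree ≤ mdeg θ + (p l).totalDegree := by
    refine le_trans (MvPolynomial.totalDegree_mul _ _) ?_
    rw [MvPolynomial.totalDegree_monomial _ one_ne_zero, mdeg_eq]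
  exact le_trans h2 (le_trans h3 (hdeg l))

lemma riesz_shift_term_nonneg (k d : ℕ) (y : (Fin n →₀ ℕ) → ℝ)
    (F σ : MvPolynomial (Fin n) ℝ) (hσ : IsSos σ)
    (hdeg : (σ * F).totalDegree ≤ 2 * d) (hPSD : IsPSD (locMat k F y))
    (θ : Fin n →₀ ℕ) (hθ : mdeg θ + d ≤ k) :
    0 ≤ Riesz y (monomial (θ + θ) 1 * (σ * F)) := by
  by_cases hF : F = 0
  · simp [hF, Riesz]
  obtain ⟨L, p, rfl⟩ := hσ
  by_cases hσ0 : (∑ l, p l ^ 2) = 0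
  · rw [hσ0]; simp [Riesz]
  refine riesz_shift_nonneg k y F hPSD θ p fun l => ?_
  have h1 : 2 * (p l).totalDegree ≤ (∑ i, p i ^ 2).totalDegree := sos_deg_le p l
  have h2 : (∑ i, p i ^ 2).totalDegree + F.totalDegree ≤ ((∑ i, p i ^ 2) * F).totalDegree :=
    le_totalDegree_mul hσ0 hF
  have h4 : halfCeil F.totalDegree = (F.totalDegree + 1) / 2 := rfl
  rw [h4]
  omega

lemma monVecSq_totalDegree (d : ℕ) : (monVecSq n d).totalDegree ≤ 2 * d := by
  refine le_trans (MvPolynomial.totalDegree_finset_sum _ _) (Finset.sup_le fun β hβ => ?_)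
  refine le_trans (MvPolynomial.totalDegree_pow _ _) ?_
  have h1 : (monomial β (1:ℝ)).totalDegree = mdeg β := by
    rw [MvPolynomial.totalDegree_monomial _ one_ne_zero, mdeg_eq]
  rw [h1]
  have hβd : mdeg β ≤ d := (Finset.mem_filter.mp hβ).2
  omega

end Main

/-- Under Assumption AC, for `k ≥ d` and any `y` feasible for the order-`k`
moment relaxation, every multi-index `θ` with `|θ| ≤ k − d` satisfies
`R·y_{2θ} ≥ ∑_{|β|≤d} y_{2β+2θ}`. -/
theorem shifted_moment_sum_bounded_of_AC {n m r t : ℕ}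
    (f : Fin r → MvPolynomial (Fin n) ℝ) (g : Fin t → MvPolynomial (Fin m) ℝ)
    (A : Matrix (Fin m) (Fin n) ℝ)
    (h : Fin t → MvPolynomial (Fin n) ℝ)
    (hh : ∀ j, h j = MvPolynomial.aeval
      (fun i : Fin m => ∑ l : Fin n, MvPolynomial.C (A i l) * MvPolynomial.X l) (g j))
    (d : ℕ)
    (hd : d = max (Finset.univ.sup fun i => halfCeil (f i).totalDegree)
                  (Finset.univ.sup fun j => halfCeil (h j).totalDegree))
    -- Assumption AC:
    (Rv : ℝ) (hR : 0 < Rv)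
    (a₀ : MvPolynomial (Fin n) ℝ) (a : Fin r → MvPolynomial (Fin n) ℝ)
    (b : Fin t → MvPolynomial (Fin n) ℝ)
    (ha₀ : IsSos a₀) (ha : ∀ i, IsSos (a i)) (hb : ∀ j, IsSos (b j))
    (hda : ∀ i, (a i * f i).totalDegree ≤ 2 * d)
    (hdb : ∀ j, (b j * h j).totalDegree ≤ 2 * d)
    (hcert : MvPolynomial.C Rv - monVecSq n d = a₀ + ∑ i, a i * f i + ∑ j, b j * h j)
    -- a feasible point of the order-k moment relaxation:
    (k : ℕ) (hk : d ≤ k) (y : (Fin n →₀ ℕ) → ℝ) (hy0 : y 0 = 1)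
    (hmom : IsPSD (locMat k (1 : MvPolynomial (Fin n) ℝ) y))
    (hlf : ∀ i, IsPSD (locMat k (f i) y))
    (hlh : ∀ j, IsPSD (locMat k (h j) y)) :
    ∀ θ : Fin n →₀ ℕ, mdeg θ ≤ k - d →
      (∑ β ∈ degLE n d, y (β + β + (θ + θ))) ≤ Rv * y (θ + θ) := by
  intro θ hθ
  have hθ' : mdeg θ + d ≤ k := by omega
  have hC : Riesz y (monomial (θ + θ) 1 * MvPolynomial.C Rv) = Rv * y (θ + θ) := by
    rw [MvPolynomial.C_apply, MvPolynomial.monomial_mul, one_mul, add_zero, Riesz_monomial]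
  have hM : Riesz y (monomial (θ + θ) 1 * monVecSq n d)
      = ∑ β ∈ degLE n d, y (β + β + (θ + θ)) := by
    rw [monVecSq, Finset.mul_sum, Riesz_sum]
    refine Finset.sum_congr rfl fun β _ => ?_
    have h1 : monomial (θ + θ) (1:ℝ) * (monomial β (1:ℝ)) ^ 2
        = monomial (β + β + (θ + θ)) 1 := by
      rw [sq, MvPolynomial.monomial_mul, one_mul, MvPolynomial.monomial_mul, one_mul, add_comm]
    rw [h1, Riesz_monomial, one_mul]
  have key := congrArg (fun pq => Riesz y (monomial (θ + θ) (1:ℝ) * pq)) hcert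
  rw [mul_sub, Riesz_sub, hC, hM, mul_add, mul_add, Riesz_add, Riesz_add,
    Finset.mul_sum, Finset.mul_sum, Riesz_sum, Riesz_sum] at key
  have ha₀d : a₀.totalDegree ≤ 2 * d := by
    have h1 : a₀ = MvPolynomial.C Rv - monVecSq n d - (∑ i, a i * f i) - (∑ j, b j * h j) := by
      rw [hcert]; ring
    rw [h1]
    refine le_trans (MvPolynomial.totalDegree_sub _ _) (max_le ?_ ?_)
    · refine le_trans (MvPolynomial.totalDegree_sub _ _) (max_le ?_ ?_)
      · refine le_trans (MvPolynomial.totalDegree_sub _ _) (max_le ?_ ?_)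
        · rw [MvPolynomial.totalDegree_C]; omega
        · exact monVecSq_totalDegree d
      · exact le_trans (MvPolynomial.totalDegree_finset_sum _ _)
          (Finset.sup_le fun i _ => hda i)
    · exact le_trans (MvPolynomial.totalDegree_finset_sum _ _)
        (Finset.sup_le fun j _ => hdb j)
  have n0 : 0 ≤ Riesz y (monomial (θ + θ) 1 * a₀) := by
    have := riesz_shift_term_nonneg k d y 1 a₀ ha₀ (by rwa [mul_one]) hmom θ hθ'
    rwa [mul_one] at this
  have n1 : 0 ≤ ∑ i, Riesz y (monomial (θ + θ) 1 * (a i * f i)) :=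
    Finset.sum_nonneg fun i _ =>
      riesz_shift_term_nonneg k d y (f i) (a i) (ha i) (hda i) (hlf i) θ hθ'
  have n2 : 0 ≤ ∑ j, Riesz y (monomial (θ + θ) 1 * (b j * h j)) :=
    Finset.sum_nonneg fun j _ =>
      riesz_shift_term_nonneg k d y (h j) (b j) (hb j) (hdb j) (hlh j) θ hθ'
  linarith [key, n0, n1, n2]
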